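/- For α > 0, x > 0, and complex y with y ≠ 1, the series Σ_{n=0}^∞ G_{α+n}(x) y^n converges and equals (1 − y)^{-1} (G_α(x) − y^{1-α} e^{x(y−1)} G_α(x y)), where G_α is the regularized incomplete gamma function extended to complex arguments via the principal branch. -/

import Mathlib

open Complex

/-- The regularized incomplete gamma function `G_α(z) = γ(α,z)/Γ(α)` extended to `ℂ`
(cut along the negative real axis), via the entire function `z^{-α}γ(α,z)` and the
principal value of `z^α`. -/
noncomputable def Greg (α : ℝ) (z : ℂ) : ℂ :=
  z ^ (α : ℂ) * (∑' n : ℕ, (-z) ^ n / ((n.factorial : ℂ) * ((α : ℂ) + n))) / Complex.Gamma α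

open Filter Finset

noncomputable def Sser (β : ℝ) (z : ℂ) : ℂ :=
  ∑' n : ℕ, (-z) ^ n / ((n.factorial : ℂ) * ((β : ℂ) + n))

lemma beta_add_cast (β : ℝ) (n : ℕ) : ((β : ℂ) + n) = ((β + n : ℝ) : ℂ) := by push_cast; ring

lemma beta_add_ne {β : ℝ} (hβ : 0 < β) (n : ℕ) : ((β : ℂ) + n) ≠ 0 := by
  rw [beta_add_cast]
  exact_mod_cast (by positivity : (β + (n:ℝ)) ≠ 0)

lemma abs_beta_add {β : ℝ} (hβ : 0 < β) (n : ℕ) : ‖((β : ℂ) + n)‖ = β + n := by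
  rw [beta_add_cast, Complex.norm_real, Real.norm_eq_abs, abs_of_pos (by positivity)]

lemma norm_Sterm {β : ℝ} (hβ : 0 < β) (z : ℂ) (n : ℕ) :
    ‖(-z) ^ n / ((n.factorial : ℂ) * ((β : ℂ) + n))‖
      = ‖z‖ ^ n / (n.factorial * (β + n)) := by
  rw [norm_div, norm_pow, norm_neg, norm_mul]
  simp [Complex.norm_natCast, abs_beta_add hβ]

lemma norm_Sterm_le {β : ℝ} (hβ : 0 < β) (z : ℂ) (n : ℕ) :
    ‖(-z) ^ n / ((n.factorial : ℂ) * ((β : ℂ) + n))‖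
      ≤ ‖z‖ ^ n / n.factorial * β⁻¹ := by
  rw [norm_Sterm hβ]
  calc ‖z‖ ^ n / (n.factorial * (β + n))
      = ‖z‖ ^ n / n.factorial / (β + n) := by rw [div_mul_eq_div_div]
    _ ≤ ‖z‖ ^ n / n.factorial / β := by
        gcongr
        simp
    _ = ‖z‖ ^ n / n.factorial * β⁻¹ := div_eq_mul_inv _ _

lemma summable_S {β : ℝ} (hβ : 0 < β) (z : ℂ) :
    Summable (fun n : ℕ => (-z) ^ n / ((n.factorial : ℂ) * ((β : ℂ) + n))) := by
  apply Summable.of_norm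
  exact Summable.of_nonneg_of_le (fun n => norm_nonneg _) (norm_Sterm_le hβ z)
    ((Real.summable_pow_div_factorial (‖z‖)).mul_right β⁻¹)

lemma hasSum_S {β : ℝ} (hβ : 0 < β) (z : ℂ) :
    HasSum (fun n : ℕ => (-z) ^ n / ((n.factorial : ℂ) * ((β : ℂ) + n))) (Sser β z) :=
  (summable_S hβ z).hasSum

lemma exp_hasSum (z : ℂ) : HasSum (fun n : ℕ => z ^ n / (n.factorial : ℂ)) (Complex.exp z) := by
  rw [Complex.exp_eq_exp_ℂ]
  exact NormedSpace.expSeries_div_hasSum_exp z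

lemma step {β : ℝ} (hβ : 0 < β) (z : ℂ) :
    (β : ℂ) * Sser β z = Complex.exp (-z) + z * Sser (β + 1) z := by
  set f : ℕ → ℂ := fun n => (n : ℂ) * (-z) ^ n / ((n.factorial : ℂ) * ((β : ℂ) + n)) with hf
  have hβ1 : (0:ℝ) < β + 1 := by linarith
  have h2 : HasSum (fun m : ℕ => f (m + 1)) (-z * Sser (β + 1) z) := by
    have := (hasSum_S hβ1 z).mul_left (-z)
    refine this.congr_fun fun m => ?_
    have hfac : ((m + 1).factorial : ℂ) = ((m:ℂ) + 1) * (m.factorial : ℂ) := by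
      push_cast [Nat.factorial_succ]; ring
    have hb : (((β + 1 : ℝ)) : ℂ) + m = (β : ℂ) + (m + 1) := by push_cast; ring
    have hm1 : ((m:ℂ) + 1) ≠ 0 := by exact_mod_cast Nat.succ_ne_zero m
    have hfm : ((m.factorial : ℂ)) ≠ 0 := by exact_mod_cast m.factorial_ne_zero
    have hbm : ((β : ℂ) + ((m:ℕ) + 1 : ℕ)) ≠ 0 := beta_add_ne hβ (m+1)
    push_cast at hbm
    simp only [hf, hfac, pow_succ]
    rw [hb] at *
    push_cast
    field_simp
  have h3 : HasSum f (-z * Sser (β + 1) z) := by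
    have := (hasSum_nat_add_iff (f := f) 1).mp h2
    simpa [hf] using this
  have h4 : HasSum (fun n : ℕ => (-z) ^ n / (n.factorial : ℂ)) (Complex.exp (-z)) :=
    exp_hasSum (-z)
  have h5 := h4.sub h3
  have h7 := (hasSum_S hβ z).mul_left (β : ℂ)
  have h6 : ∀ n : ℕ, (β : ℂ) * ((-z) ^ n / ((n.factorial : ℂ) * ((β : ℂ) + n)))
      = (-z) ^ n / (n.factorial : ℂ) - f n := by
    intro n
    have hbn := beta_add_ne hβ n
    have hfn : ((n.factorial : ℂ)) ≠ 0 := by exact_mod_cast n.factorial_ne_zero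
    simp only [hf]
    field_simp
    ring
  have h8 : HasSum (fun n : ℕ => (β : ℂ) * ((-z) ^ n / ((n.factorial : ℂ) * ((β : ℂ) + n))))
      (Complex.exp (-z) - -z * Sser (β + 1) z) := h5.congr_fun fun n => h6 n
  have := h7.unique h8
  rw [this]; ring

lemma Greg_eq (β : ℝ) (z : ℂ) : Greg β z = z ^ (β : ℂ) * Sser β z / Complex.Gamma β := rfl

lemma Gamma_c_ne {β : ℝ} (hβ : 0 < β) : Complex.Gamma (β : ℂ) ≠ 0 := by
  rw [Complex.Gamma_ofReal]
  exact_mod_cast (Real.Gamma_pos_of_pos hβ).ne'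

lemma Greg_zero {β : ℝ} (hβ : 0 < β) : Greg β 0 = 0 := by
  rw [Greg_eq, Complex.zero_cpow (by exact_mod_cast hβ.ne' : (β:ℂ) ≠ 0)]
  simp

lemma Greg_succ {β : ℝ} (hβ : 0 < β) (z : ℂ) :
    Greg (β + 1) z = Greg β z - z ^ (β : ℂ) * Complex.exp (-z) / Complex.Gamma ((β : ℂ) + 1) := by
  have hβc : (β : ℂ) ≠ 0 := by exact_mod_cast hβ.ne'
  have hΓ : Complex.Gamma (β : ℂ) ≠ 0 := Gamma_c_ne hβ
  have hΓ1 : Complex.Gamma ((β : ℂ) + 1) = (β : ℂ) * Complex.Gamma (β : ℂ) :=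
    Complex.Gamma_add_one _ hβc
  rcases eq_or_ne z 0 with rfl | hz
  · rw [Greg_zero (by linarith), Greg_zero hβ,
      Complex.zero_cpow hβc]
    simp
  · rw [Greg_eq, Greg_eq]
    have hcast : (((β + 1 : ℝ)) : ℂ) = (β : ℂ) + 1 := by push_cast; ring
    rw [hcast, Complex.cpow_add _ _ hz, Complex.cpow_one]
    have hS : Sser (β + 1) z = ((β : ℂ) * Sser β z - Complex.exp (-z)) / z := by
      rw [step hβ z]; field_simp; ring
    rw [hS, hΓ1]
    field_simp

lemma Gamma_fact_le {β : ℝ} (hβ : 0 < β) (k : ℕ) :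
    Real.Gamma (β + 1) * k.factorial ≤ Real.Gamma (β + k + 1) := by
  induction k with
  | zero => simp
  | succ k ih =>
    have hpos : (0:ℝ) < β + k + 1 := by positivity
    have hstep : Real.Gamma (β + (k+1:ℕ) + 1) = (β + k + 1) * Real.Gamma (β + k + 1) := by
      rw [show β + ((k:ℕ)+1:ℕ) + 1 = (β + k + 1) + 1 by push_cast; ring,
        Real.Gamma_add_one hpos.ne']
    rw [hstep]
    have hΓpos : 0 < Real.Gamma (β + k + 1) := Real.Gamma_pos_of_pos hpos
    calc Real.Gamma (β + 1) * ((k+1:ℕ).factorial : ℝ)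
        = ((k:ℝ) + 1) * (Real.Gamma (β + 1) * k.factorial) := by
          push_cast [Nat.factorial_succ]; ring
      _ ≤ ((k:ℝ) + 1) * Real.Gamma (β + k + 1) := by
          have : (0:ℝ) ≤ (k:ℝ) + 1 := by positivity
          nlinarith
      _ ≤ (β + k + 1) * Real.Gamma (β + k + 1) := by nlinarith

lemma S_bound {β : ℝ} (hβ : 0 < β) (z : ℂ) :
    ‖Sser β z‖ ≤ Real.exp (‖z‖) / β := by
  have hsum : Summable (fun n : ℕ => ‖(-z) ^ n / ((n.factorial : ℂ) * ((β : ℂ) + n))‖) :=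
    (summable_S hβ z).norm
  refine (norm_tsum_le_tsum_norm hsum).trans ?_
  have hexp : HasSum (fun n : ℕ => ‖z‖ ^ n / (n.factorial : ℝ) * β⁻¹)
      (Real.exp (‖z‖) * β⁻¹) := by
    have : HasSum (fun n : ℕ => ‖z‖ ^ n / (n.factorial : ℝ))
        (Real.exp (‖z‖)) := by
      rw [Real.exp_eq_exp_ℝ]
      exact NormedSpace.expSeries_div_hasSum_exp _
    exact this.mul_right _
  rw [div_eq_mul_inv]
  rw [← hexp.tsum_eq]
  exact Summable.tsum_le_tsum (fun n => norm_Sterm_le hβ z n) hsum hexp.summable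

lemma Greg_norm_le {β : ℝ} (hβ : 0 < β) {z : ℂ} (hz : z ≠ 0) (N : ℕ) :
    ‖Greg (β + N) z‖ ≤ (‖z‖ ^ β * Real.exp (‖z‖) / Real.Gamma (β + 1))
      * (‖z‖ ^ N / N.factorial) := by
  have hβN : (0:ℝ) < β + N := by positivity
  have habs : (0:ℝ) < ‖z‖ := norm_pos_iff.mpr hz
  have h1 : ‖(z : ℂ) ^ (((β + N : ℝ)) : ℂ)‖ = ‖z‖ ^ (β + (N:ℝ)) := by
    rw [Complex.norm_cpow_of_ne_zero hz]
    simp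
  have h2 : ‖Complex.Gamma (((β + N : ℝ)) : ℂ)‖ = Real.Gamma (β + N) := by
    rw [Complex.Gamma_ofReal, Complex.norm_real, Real.norm_eq_abs,
      abs_of_pos (Real.Gamma_pos_of_pos hβN)]
  rw [Greg_eq, norm_div, norm_mul, h1, h2]
  have h3 : ‖Sser (β + N) z‖ ≤ Real.exp (‖z‖) / (β + N) := S_bound hβN z
  have h4 : ‖z‖ ^ (β + (N:ℝ)) = ‖z‖ ^ β * ‖z‖ ^ N := by
    rw [Real.rpow_add habs, Real.rpow_natCast]
  have h5 : Real.Gamma (β + 1) * N.factorial ≤ (β + N) * Real.Gamma (β + N) := by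
    have := Gamma_fact_le hβ N
    rwa [show β + (N:ℝ) + 1 = (β + N) + 1 by ring, Real.Gamma_add_one hβN.ne'] at this
  have hΓpos : 0 < Real.Gamma (β + N) := Real.Gamma_pos_of_pos hβN
  have hΓ1pos : 0 < Real.Gamma (β + 1) := Real.Gamma_pos_of_pos (by linarith)
  rw [h4]
  calc ‖z‖ ^ β * ‖z‖ ^ N * ‖Sser (β + N) z‖ / Real.Gamma (β + N)
      ≤ ‖z‖ ^ β * ‖z‖ ^ N * (Real.exp (‖z‖) / (β + N))
          / Real.Gamma (β + N) := by gcongr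
    _ = (‖z‖ ^ β * ‖z‖ ^ N * Real.exp (‖z‖))
          / ((β + N) * Real.Gamma (β + N)) := by rw [← mul_div_assoc, div_div]
    _ ≤ (‖z‖ ^ β * ‖z‖ ^ N * Real.exp (‖z‖))
          / (Real.Gamma (β + 1) * N.factorial) := by
        gcongr
    _ = _ := by ring

lemma Greg_tendsto {β : ℝ} (hβ : 0 < β) (z : ℂ) :
    Tendsto (fun N : ℕ => Greg (β + N) z) atTop (nhds 0) := by
  rcases eq_or_ne z 0 with rfl | hz
  · have : (fun N : ℕ => Greg (β + N) 0) = fun _ => (0:ℂ) := by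
      funext N; exact Greg_zero (by positivity)
    rw [this]; exact tendsto_const_nhds
  · apply squeeze_zero_norm (Greg_norm_le hβ hz)
    have := (FloorSemiring.tendsto_pow_div_factorial_atTop (K := ℝ) (‖z‖)).const_mul
      (‖z‖ ^ β * Real.exp (‖z‖) / Real.Gamma (β + 1))
    simpa using this

lemma cpow_real_add_nat (z : ℂ) {β : ℝ} (hβ : 0 < β) (N : ℕ) :
    z ^ (((β + N : ℝ)) : ℂ) = z ^ (β : ℂ) * z ^ N := by
  rcases eq_or_ne z 0 with rfl | hz
  · rw [Complex.zero_cpow (by exact_mod_cast (by positivity : (β + (N:ℝ)) ≠ 0)),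
      Complex.zero_cpow (by exact_mod_cast hβ.ne' : (β:ℂ) ≠ 0), zero_mul]
  · rw [show (((β + N : ℝ)) : ℂ) = (β : ℂ) + (N : ℂ) by push_cast; ring,
      Complex.cpow_add _ _ hz, Complex.cpow_natCast]

lemma Greg_partial {β : ℝ} (hβ : 0 < β) (z : ℂ) (N : ℕ) :
    ∑ k ∈ Finset.range N,
        z ^ (β : ℂ) * Complex.exp (-z) * z ^ k / Complex.Gamma ((β : ℂ) + k + 1)
      = Greg β z - Greg (β + N) z := by
  induction N with
  | zero => simp
  | succ N ih =>
    rw [Finset.sum_range_succ, ih]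
    have h1 : Greg (β + (N + 1 : ℕ)) z = Greg ((β + N) + 1) z := by
      congr 1
      push_cast
      ring
    rw [h1, Greg_succ (by positivity : (0:ℝ) < β + N) z]
    have h2 : z ^ (((β + N : ℝ)) : ℂ) = z ^ (β : ℂ) * z ^ N := cpow_real_add_nat z hβ N
    have h3 : (((β + N : ℝ)) : ℂ) + 1 = (β : ℂ) + N + 1 := by push_cast; ring
    rw [h2, h3]
    ring

lemma summable_expansion {β : ℝ} (hβ : 0 < β) (z : ℂ) :
    Summable (fun k : ℕ =>
      z ^ (β : ℂ) * Complex.exp (-z) * z ^ k / Complex.Gamma ((β : ℂ) + k + 1)) := by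
  apply Summable.of_norm
  refine Summable.of_nonneg_of_le (fun n => norm_nonneg _) (fun k => ?_)
    (((Real.summable_pow_div_factorial (‖z‖)).mul_right
      (‖z ^ (β : ℂ) * Complex.exp (-z)‖ / Real.Gamma (β + 1))))
  have hcast : ((β : ℂ) + k + 1) = (((β + k + 1 : ℝ)) : ℂ) := by push_cast; ring
  have hΓpos : 0 < Real.Gamma (β + k + 1) := Real.Gamma_pos_of_pos (by positivity)
  have hΓ1pos : 0 < Real.Gamma (β + 1) := Real.Gamma_pos_of_pos (by positivity)
  have hΓ : ‖Complex.Gamma ((β : ℂ) + k + 1)‖ = Real.Gamma (β + k + 1) := by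
    rw [hcast, Complex.Gamma_ofReal, Complex.norm_real, Real.norm_eq_abs,
      abs_of_pos hΓpos]
  rw [norm_div, norm_mul, hΓ, norm_pow]
  have h5 := Gamma_fact_le hβ k
  have hkf : (0:ℝ) < (k.factorial : ℝ) := by exact_mod_cast k.factorial_pos
  calc ‖z ^ (β:ℂ) * Complex.exp (-z)‖ * ‖z‖ ^ k / Real.Gamma (β + k + 1)
      ≤ ‖z ^ (β:ℂ) * Complex.exp (-z)‖ * ‖z‖ ^ k
          / (Real.Gamma (β + 1) * k.factorial) := by gcongr
    _ = ‖z‖ ^ k / k.factorial * (‖z ^ (β:ℂ) * Complex.exp (-z)‖ / Real.Gamma (β+1)) := by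
        field_simp
    _ ≤ _ := le_refl _

lemma Greg_expansion {β : ℝ} (hβ : 0 < β) (z : ℂ) :
    HasSum (fun k : ℕ =>
        z ^ (β : ℂ) * Complex.exp (-z) * z ^ k / Complex.Gamma ((β : ℂ) + k + 1))
      (Greg β z) := by
  have hsum := summable_expansion hβ z
  have hlim : Tendsto (fun N : ℕ => ∑ k ∈ Finset.range N,
      z ^ (β : ℂ) * Complex.exp (-z) * z ^ k / Complex.Gamma ((β : ℂ) + k + 1))
      atTop (nhds (Greg β z)) := by
    simp only [Greg_partial hβ z]
    have h0 : Tendsto (fun _ : ℕ => Greg β z) atTop (nhds (Greg β z)) := tendsto_const_nhds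
    simpa using h0.sub (Greg_tendsto hβ z)
  have := hsum.hasSum.tendsto_sum_nat
  have heq := tendsto_nhds_unique this hlim
  exact heq ▸ hsum.hasSum

set_option maxHeartbeats 1000000 in
theorem stmt6 (α x : ℝ) (hα : 0 < α) (hx : 0 < x) (y : ℂ) (hy : y ≠ 1) :
    HasSum (fun n : ℕ => Greg (α + n) (x : ℂ) * y ^ n)
      ((1 - y)⁻¹ *
        (Greg α (x : ℂ) -
          y ^ ((1 : ℂ) - (α : ℂ)) * Complex.exp ((x : ℂ) * (y - 1)) * Greg α ((x : ℂ) * y))) := by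
  have hxc : (x : ℂ) ≠ 0 := by exact_mod_cast hx.ne'
  set c : ℕ → ℂ := fun j => (x:ℂ) ^ (α:ℂ) * Complex.exp (-(x:ℂ)) * (x:ℂ) ^ j
      / Complex.Gamma ((α:ℂ) + j + 1) with hc
  have hA : HasSum c (Greg α (x:ℂ)) := Greg_expansion hα (x:ℂ)
  -- fiber sums in the first coordinate
  have hB : ∀ n : ℕ, HasSum (fun k : ℕ => c (n + k)) (Greg (α + n) (x:ℂ)) := by
    intro n
    have h := Greg_expansion (show (0:ℝ) < α + n by positivity) (x:ℂ)
    refine h.congr_fun fun k => ?_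
    simp only [hc]
    rw [cpow_real_add_nat _ hα n]
    have hcast : (((α + n : ℝ)) : ℂ) + k + 1 = (α : ℂ) + (n + k : ℕ) + 1 := by push_cast; ring
    rw [hcast, pow_add]
    ring
  -- the double series
  set F : ℕ × ℕ → ℂ := fun p => if p.1 ≤ p.2 then c p.2 * y ^ p.1 else 0 with hF
  set K : ℝ := ‖(x:ℂ) ^ (α:ℂ) * Complex.exp (-(x:ℂ))‖ / Real.Gamma (α + 1) with hK
  set M : ℝ := max 1 (‖y‖) with hM
  have hM1 : (1:ℝ) ≤ M := le_max_left _ _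
  have hyM : ‖y‖ ≤ M := le_max_right _ _
  have hKpos : 0 ≤ K := by positivity
  have hcj : ∀ j : ℕ, ‖c j‖ ≤ K * (x ^ j / j.factorial) := by
    intro j
    have hΓpos : 0 < Real.Gamma (α + j + 1) := Real.Gamma_pos_of_pos (by positivity)
    have hΓ1pos : 0 < Real.Gamma (α + 1) := Real.Gamma_pos_of_pos (by positivity)
    have hΓ : ‖Complex.Gamma ((α : ℂ) + j + 1)‖ = Real.Gamma (α + j + 1) := by
      rw [show ((α : ℂ) + j + 1) = (((α + j + 1 : ℝ)) : ℂ) by push_cast; ring,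
        Complex.Gamma_ofReal, Complex.norm_real, Real.norm_eq_abs, abs_of_pos hΓpos]
    have h5 := Gamma_fact_le hα j
    have hkf : (0:ℝ) < (j.factorial : ℝ) := by exact_mod_cast j.factorial_pos
    have hxj : ‖(x:ℂ) ^ j‖ = x ^ j := by
      rw [norm_pow, Complex.norm_real, Real.norm_eq_abs, abs_of_pos hx]
    simp only [hc]
    rw [norm_div, hΓ]
    calc ‖(x:ℂ) ^ (α:ℂ) * Complex.exp (-(x:ℂ)) * (x:ℂ) ^ j‖ / Real.Gamma (α + j + 1)
        ≤ ‖(x:ℂ) ^ (α:ℂ) * Complex.exp (-(x:ℂ))‖ * x ^ j / Real.Gamma (α + j + 1) := by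
          rw [norm_mul, hxj]
      _ ≤ ‖(x:ℂ) ^ (α:ℂ) * Complex.exp (-(x:ℂ))‖ * x ^ j
            / (Real.Gamma (α + 1) * j.factorial) := by gcongr
      _ = K * (x ^ j / j.factorial) := by rw [hK]; field_simp
  have hFsum : Summable F := by
    apply Summable.of_norm
    have hg : Summable (fun p : ℕ × ℕ => ((1:ℝ)/2) ^ p.1 * (K * (2*M*x) ^ p.2 / p.2.factorial)) := by
      apply Summable.mul_of_nonneg (f := fun n : ℕ => ((1:ℝ)/2) ^ n)
        (g := fun j : ℕ => K * (2*M*x) ^ j / j.factorial)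
      · exact summable_geometric_of_lt_one (by norm_num) (by norm_num)
      · exact ((Real.summable_pow_div_factorial (2*M*x)).mul_left K).congr
          fun j => (mul_div_assoc _ _ _).symm
      · intro n; positivity
      · intro j
        have : (0:ℝ) < 2*M*x := by nlinarith
        positivity
    refine Summable.of_nonneg_of_le (fun p => norm_nonneg _) (fun p => ?_) hg
    obtain ⟨n, j⟩ := p
    simp only [hF]
    by_cases hnj : n ≤ j
    · rw [if_pos hnj]
      have h2Mx : (0:ℝ) < 2*M*x := by nlinarith
      have h1 : ‖y‖ ^ n ≤ M ^ j :=
        (pow_le_pow_left₀ (norm_nonneg y) hyM n).trans (pow_le_pow_right₀ hM1 hnj)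
      have h2 : (1:ℝ) ≤ 2 ^ j * (1/2) ^ n := by
        rw [one_div, inv_pow, ← div_eq_mul_inv, le_div_iff₀ (by positivity)]
        calc (1:ℝ) * 2 ^ n = 2 ^ n := one_mul _
          _ ≤ 2 ^ j := pow_le_pow_right₀ one_le_two hnj
      calc ‖c j * y ^ n‖ = ‖c j‖ * ‖y‖ ^ n := by
            simp [norm_mul, norm_pow]
        _ ≤ (K * (x ^ j / j.factorial)) * M ^ j := by
            apply mul_le_mul (hcj j) h1 (by positivity)
            positivity
        _ ≤ ((K * (x ^ j / j.factorial)) * M ^ j) * (2 ^ j * (1/2) ^ n) := by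
            apply le_mul_of_one_le_right (by positivity) h2
        _ = (1/2) ^ n * (K * (2*M*x) ^ j / j.factorial) := by
            rw [mul_pow, mul_pow]; ring
    · rw [if_neg hnj, norm_zero]
      positivity
  have hFa : HasSum F (∑' p, F p) := hFsum.hasSum
  set a : ℂ := ∑' p, F p with ha
  -- LHS
  have hL : HasSum (fun n : ℕ => Greg (α + n) (x:ℂ) * y ^ n) a := by
    refine hFa.prod_fiberwise fun n => ?_
    have hfib : HasSum (fun k : ℕ => c (n + k) * y ^ n) (Greg (α + n) (x:ℂ) * y ^ n) :=
      (hB n).mul_right _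
    have hinj : Function.Injective (fun k : ℕ => n + k) := add_right_injective n
    refine (Function.Injective.hasSum_iff (f := fun j => F (n, j))
      (a := Greg (α + n) (x:ℂ) * y ^ n) hinj ?_).mp ?_
    · intro j hj
      simp only [Set.mem_range] at hj
      have : ¬ n ≤ j := by
        intro hle
        exact hj ⟨j - n, by omega⟩
      simp only [hF]
      rw [if_neg this]
    · refine hfib.congr_fun fun k => ?_
      simp only [hF, Function.comp]
      rw [if_pos (by omega)]
  -- sum over the other order
  have hswap : HasSum (fun q : ℕ × ℕ => F (q.2, q.1)) a :=
    ((Equiv.prodComm ℕ ℕ).hasSum_iff).mpr hFa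
  have hE : HasSum (fun j : ℕ => c j * ((y ^ (j+1) - 1) / (y - 1))) a := by
    refine hswap.prod_fiberwise fun j => ?_
    have hfin : ∀ n ∉ Finset.range (j+1), F (n, j) = 0 := by
      intro n hn
      simp only [Finset.mem_range] at hn
      simp only [hF]
      rw [if_neg (by omega)]
    have : HasSum (fun n => F (n, j)) (∑ n ∈ Finset.range (j+1), F (n, j)) :=
      hasSum_sum_of_ne_finset_zero hfin
    convert this using 1
    rw [show ∑ n ∈ Finset.range (j+1), F (n, j) = ∑ n ∈ Finset.range (j+1), c j * y ^ n by
      apply Finset.sum_congr rfl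
      intro n hn
      simp only [Finset.mem_range] at hn
      simp only [hF]
      rw [if_pos (by omega)]]
    rw [← Finset.mul_sum, geom_sum_eq hy]
  -- the tail sum
  set W : ℂ := y ^ ((1 : ℂ) - (α : ℂ)) * Complex.exp ((x : ℂ) * (y - 1)) * Greg α ((x : ℂ) * y)
    with hW
  have hT : HasSum (fun j : ℕ => c j * y ^ (j+1)) W := by
    rcases eq_or_ne y 0 with rfl | hy0
    · have h0 : (fun j : ℕ => c j * (0:ℂ) ^ (j+1)) = fun _ => 0 := by
        funext j
        rw [zero_pow (Nat.succ_ne_zero j), mul_zero]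
      rw [h0, hW, mul_zero, Greg_zero hα, mul_zero]
      exact hasSum_zero
    · have hxy : (x:ℂ) * y ≠ 0 := mul_ne_zero hxc hy0
      have base := Greg_expansion hα ((x:ℂ) * y)
      have h := base.mul_left (y ^ ((1 : ℂ) - (α : ℂ)) * Complex.exp ((x : ℂ) * (y - 1)))
      rw [hW]
      refine HasSum.congr_fun h fun k => ?_
      symm
      have key1 : ((x:ℂ) * y) ^ (α:ℂ) = (x:ℂ) ^ (α:ℂ) * y ^ (α:ℂ) := by
        rw [Complex.cpow_def_of_ne_zero hxy, Complex.cpow_def_of_ne_zero hxc,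
          Complex.cpow_def_of_ne_zero hy0, Complex.log_ofReal_mul hx hy0, add_mul,
          Complex.exp_add, Complex.ofReal_log hx.le]
      have key2 : y ^ ((1:ℂ) - (α:ℂ)) * y ^ (α:ℂ) = y := by
        rw [← Complex.cpow_add _ _ hy0, sub_add_cancel, Complex.cpow_one]
      have key3 : Complex.exp ((x:ℂ) * (y - 1)) * Complex.exp (-((x:ℂ) * y))
          = Complex.exp (-(x:ℂ)) := by
        rw [← Complex.exp_add]; congr 1; ring
      simp only [hc]
      rw [key1, mul_pow]
      calc (y ^ ((1:ℂ) - (α:ℂ)) * Complex.exp ((x:ℂ) * (y - 1))) *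
            ((x:ℂ) ^ (α:ℂ) * y ^ (α:ℂ) * Complex.exp (-((x:ℂ) * y)) * ((x:ℂ) ^ k * y ^ k)
              / Complex.Gamma ((α:ℂ) + k + 1))
          = (y ^ ((1:ℂ) - (α:ℂ)) * y ^ (α:ℂ)) *
              (Complex.exp ((x:ℂ) * (y - 1)) * Complex.exp (-((x:ℂ) * y))) *
              ((x:ℂ) ^ (α:ℂ) * (x:ℂ) ^ k * y ^ k) / Complex.Gamma ((α:ℂ) + k + 1) := by
            ring
        _ = y * Complex.exp (-(x:ℂ)) *
              ((x:ℂ) ^ (α:ℂ) * (x:ℂ) ^ k * y ^ k) / Complex.Gamma ((α:ℂ) + k + 1) := by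
            rw [key2, key3]
        _ = (x:ℂ) ^ (α:ℂ) * Complex.exp (-(x:ℂ)) * (x:ℂ) ^ k
              / Complex.Gamma ((α:ℂ) + k + 1) * y ^ (k+1) := by
            rw [pow_succ]; ring
  -- combine
  have hy1 : y - 1 ≠ 0 := sub_ne_zero.mpr hy
  have h1y : (1:ℂ) - y ≠ 0 := sub_ne_zero.mpr (Ne.symm hy)
  have hRHS : HasSum (fun j : ℕ => (1 - y)⁻¹ * (c j - c j * y ^ (j+1)))
      ((1 - y)⁻¹ * (Greg α (x:ℂ) - W)) := (hA.sub hT).mul_left _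
  have hE' : HasSum (fun j : ℕ => c j * ((y ^ (j+1) - 1) / (y - 1)))
      ((1 - y)⁻¹ * (Greg α (x:ℂ) - W)) := by
    refine hRHS.congr_fun fun j => ?_
    field_simp
    ring
  have heq : a = (1 - y)⁻¹ * (Greg α (x:ℂ) - W) := hE.unique hE'
  exact heq ▸ hL
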